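/- There exists a unitary operator T on ℂ^d ⊗ ℂ^d satisfying the four conjugation relations T (X ⊗ I) T† = X† ⊗ I, T (I ⊗ X) T† = I ⊗ X†, T (Z ⊗ I) T† = Z† ⊗ X†, and T (I ⊗ Z) T† = X† ⊗ Z†. -/

import Mathlib

open Matrix Kronecker

/-- ω = exp(2πi/d), a primitive d-th root of unity. -/
noncomputable def qomega (d : ℕ) : ℂ := Complex.exp (2 * Real.pi * Complex.I / d)

/-- Generalized Pauli `Z`: `Z e_k = ω^k e_k`. -/
noncomputable def Zmat (d : ℕ) [NeZero d] : Matrix (ZMod d) (ZMod d) ℂ :=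
  Matrix.diagonal fun k => qomega d ^ k.val

/-- Generalized Pauli `X`: `X e_k = e_{k-1}` (index mod d). -/
noncomputable def Xmat (d : ℕ) [NeZero d] : Matrix (ZMod d) (ZMod d) ℂ :=
  Matrix.of fun j k => if k = j + 1 then 1 else 0

noncomputable def qe (d : ℕ) [NeZero d] (x : ZMod d) : ℂ := qomega d ^ x.val

lemma qprim (d : ℕ) [NeZero d] : IsPrimitiveRoot (qomega d) d :=
  Complex.isPrimitiveRoot_exp d (NeZero.ne d)

lemma qe_zero (d : ℕ) [NeZero d] : qe d 0 = 1 := by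
  simp [qe, ZMod.val_zero]

lemma qe_add (d : ℕ) [NeZero d] (a b : ZMod d) : qe d (a + b) = qe d a * qe d b := by
  have hd1 : qomega d ^ d = 1 := (qprim d).pow_eq_one
  have h : a.val + b.val = (a + b).val + d * ((a.val + b.val) / d) := by
    rw [ZMod.val_add]; exact (Nat.mod_add_div _ _).symm
  rw [qe, qe, qe, ← pow_add, h, pow_add, pow_mul, hd1, one_pow, mul_one]

lemma qe_star (d : ℕ) [NeZero d] (a : ZMod d) : starRingEnd ℂ (qe d a) = qe d (-a) := by
  have h1 : qe d a * qe d (-a) = 1 := by rw [← qe_add, add_neg_cancel, qe_zero]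
  have habs : ‖qe d a‖ = 1 := by
    have : qe d a ^ d = 1 := by
      rw [qe, ← pow_mul, mul_comm, pow_mul, (qprim d).pow_eq_one, one_pow]
    exact Complex.norm_eq_one_of_pow_eq_one this (NeZero.ne d)
  rw [← Complex.inv_eq_conj habs]
  exact (eq_inv_of_mul_eq_one_right h1).symm

lemma qe_sum (d : ℕ) [NeZero d] (c : ZMod d) :
    ∑ l : ZMod d, qe d (l * c) = if c = 0 then (d : ℂ) else 0 := by
  by_cases hc : c = 0
  · simp [hc, qe_zero, Finset.card_univ, ZMod.card]
  · simp only [hc, if_false]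
    have hne : qe d c ≠ 1 := by
      have hv : c.val ≠ 0 := by
        simpa [ZMod.val_eq_zero] using hc
      exact (qprim d).pow_ne_one_of_pos_of_lt hv (ZMod.val_lt c)
    have key : (∑ l : ZMod d, qe d (l * c)) * (qe d c - 1) = 0 := by
      have h2 : ∑ l : ZMod d, qe d ((l + 1) * c) = ∑ l : ZMod d, qe d (l * c) :=
        Fintype.sum_equiv (Equiv.addRight 1) (fun l => qe d ((l + 1) * c))
          (fun l => qe d (l * c)) (fun l => rfl)
      have h3 : ∀ l : ZMod d, qe d ((l + 1) * c) = qe d (l * c) * qe d c := by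
        intro l; rw [add_mul, one_mul, qe_add]
      rw [mul_sub, mul_one, Finset.sum_mul]
      simp_rw [← h3]
      rw [h2, sub_self]
    rcases mul_eq_zero.mp key with h | h
    · exact h
    · exact absurd (by linear_combination h) hne

lemma qe_star' (d : ℕ) [NeZero d] (a : ZMod d) : star (qe d a) = qe d (-a) :=
  qe_star d a

noncomputable def Wmat (d : ℕ) [NeZero d] :
    Matrix (ZMod d × ZMod d) (ZMod d × ZMod d) ℂ :=
  Matrix.of fun p q => qe d (-((p.1 + q.1) * (p.2 + q.2)))

lemma shift_iff (d : ℕ) [NeZero d] (l a : ZMod d) : (l = a + 1) ↔ (a = l - 1) := by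
  constructor <;> intro h <;> simp [h]

lemma W_unit (d : ℕ) [NeZero d] :
    Wmat d * (Wmat d)ᴴ = ((d : ℂ) * (d : ℂ)) • 1 := by
  ext ⟨j, k⟩ ⟨j', k'⟩
  rw [Matrix.mul_apply, Fintype.sum_prod_type]
  simp only [Wmat, Matrix.conjTranspose_apply, Matrix.of_apply, qe_star']
  have h1 : ∀ l m : ZMod d,
      qe d (-((j + l) * (k + m))) * qe d (-(-((j' + l) * (k' + m))))
        = qe d (j' * k' - j * k) * qe d (l * (k' - k)) * qe d (m * (j' - j)) := by
    intro l m
    rw [← qe_add, ← qe_add, ← qe_add]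
    congr 1
    ring
  simp_rw [h1, mul_assoc, ← Finset.mul_sum, ← Finset.sum_mul, qe_sum]
  simp only [Matrix.smul_apply, Matrix.one_apply, smul_eq_mul, sub_eq_zero]
  by_cases hk : k' = k
  · by_cases hj : j' = j
    · subst hk; subst hj
      simp [qe_zero, Prod.ext_iff]
    · simp [hj, Prod.ext_iff, Ne.symm hj]
  · simp [hk, Prod.ext_iff, Ne.symm hk]

lemma W_X1 (d : ℕ) [NeZero d] :
    Wmat d * (Xmat d ⊗ₖ (1 : Matrix (ZMod d) (ZMod d) ℂ))
      = ((Xmat d)ᴴ ⊗ₖ (1 : Matrix (ZMod d) (ZMod d) ℂ)) * Wmat d := by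
  ext ⟨j, k⟩ ⟨l, m⟩
  rw [Matrix.mul_apply, Matrix.mul_apply, Fintype.sum_prod_type, Fintype.sum_prod_type]
  simp only [Wmat, Xmat, Matrix.kroneckerMap_apply, Matrix.of_apply, Matrix.one_apply,
    Matrix.conjTranspose_apply, apply_ite (star : ℂ → ℂ), star_one, star_zero, shift_iff,
    mul_ite, ite_mul, mul_one, mul_zero, one_mul, zero_mul,
    Finset.sum_ite_eq, Finset.sum_ite_eq', Finset.mem_univ, if_true]
  congr 1
  ring

lemma W_1X (d : ℕ) [NeZero d] :
    Wmat d * ((1 : Matrix (ZMod d) (ZMod d) ℂ) ⊗ₖ Xmat d)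
      = ((1 : Matrix (ZMod d) (ZMod d) ℂ) ⊗ₖ (Xmat d)ᴴ) * Wmat d := by
  ext ⟨j, k⟩ ⟨l, m⟩
  rw [Matrix.mul_apply, Matrix.mul_apply, Fintype.sum_prod_type, Fintype.sum_prod_type]
  simp only [Wmat, Xmat, Matrix.kroneckerMap_apply, Matrix.of_apply, Matrix.one_apply,
    Matrix.conjTranspose_apply, apply_ite (star : ℂ → ℂ), star_one, star_zero, shift_iff,
    mul_ite, ite_mul, mul_one, mul_zero, one_mul, zero_mul,
    Finset.sum_ite_eq, Finset.sum_ite_eq', Finset.mem_univ, if_true]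
  congr 1
  ring

lemma W_Z1 (d : ℕ) [NeZero d] :
    Wmat d * (Zmat d ⊗ₖ (1 : Matrix (ZMod d) (ZMod d) ℂ))
      = ((Zmat d)ᴴ ⊗ₖ (Xmat d)ᴴ) * Wmat d := by
  ext ⟨j, k⟩ ⟨l, m⟩
  rw [Matrix.mul_apply, Matrix.mul_apply, Fintype.sum_prod_type, Fintype.sum_prod_type]
  simp only [Wmat, Xmat, Zmat, Matrix.kroneckerMap_apply, Matrix.of_apply, Matrix.one_apply,
    Matrix.diagonal_apply, Matrix.conjTranspose_apply, apply_ite (star : ℂ → ℂ), star_one, star_zero,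
    shift_iff, mul_ite, ite_mul, mul_one, mul_zero, one_mul, zero_mul,
    Finset.sum_ite_eq, Finset.sum_ite_eq', Finset.mem_univ, if_true]
  show qe d (-((j + l) * (k + m))) * qe d l
      = starRingEnd ℂ (qe d j) * qe d (-((j + (l)) * (k - 1 + m)))
  rw [qe_star, ← qe_add, ← qe_add]
  congr 1
  ring

lemma W_1Z (d : ℕ) [NeZero d] :
    Wmat d * ((1 : Matrix (ZMod d) (ZMod d) ℂ) ⊗ₖ Zmat d)
      = ((Xmat d)ᴴ ⊗ₖ (Zmat d)ᴴ) * Wmat d := by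
  ext ⟨j, k⟩ ⟨l, m⟩
  rw [Matrix.mul_apply, Matrix.mul_apply, Fintype.sum_prod_type, Fintype.sum_prod_type]
  simp only [Wmat, Xmat, Zmat, Matrix.kroneckerMap_apply, Matrix.of_apply, Matrix.one_apply,
    Matrix.diagonal_apply, Matrix.conjTranspose_apply, apply_ite (star : ℂ → ℂ), star_one, star_zero,
    shift_iff, mul_ite, ite_mul, mul_one, mul_zero, one_mul, zero_mul,
    Finset.sum_ite_eq, Finset.sum_ite_eq', Finset.mem_univ, if_true]
  show qe d (-((j + l) * (k + m))) * qe d m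
      = starRingEnd ℂ (qe d k) * qe d (-((j - 1 + l) * (k + m)))
  rw [qe_star, ← qe_add, ← qe_add]
  congr 1
  ring

/-- there exists a unitary `T` on `ℂ^d ⊗ ℂ^d` with
`T (X ⊗ I) T† = X† ⊗ I`, `T (I ⊗ X) T† = I ⊗ X†`, `T (Z ⊗ I) T† = Z† ⊗ X†`,
and `T (I ⊗ Z) T† = X† ⊗ Z†`. -/
theorem two_qudit_gate_exists (d : ℕ) [NeZero d] (hd : 2 ≤ d) :
    ∃ T : Matrix (ZMod d × ZMod d) (ZMod d × ZMod d) ℂ,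
      T ∈ Matrix.unitaryGroup (ZMod d × ZMod d) ℂ ∧
      T * (Xmat d ⊗ₖ (1 : Matrix (ZMod d) (ZMod d) ℂ)) * Tᴴ
        = (Xmat d)ᴴ ⊗ₖ (1 : Matrix (ZMod d) (ZMod d) ℂ) ∧
      T * ((1 : Matrix (ZMod d) (ZMod d) ℂ) ⊗ₖ Xmat d) * Tᴴ
        = (1 : Matrix (ZMod d) (ZMod d) ℂ) ⊗ₖ (Xmat d)ᴴ ∧
      T * (Zmat d ⊗ₖ (1 : Matrix (ZMod d) (ZMod d) ℂ)) * Tᴴ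
        = (Zmat d)ᴴ ⊗ₖ (Xmat d)ᴴ ∧
      T * ((1 : Matrix (ZMod d) (ZMod d) ℂ) ⊗ₖ Zmat d) * Tᴴ
        = (Xmat d)ᴴ ⊗ₖ (Zmat d)ᴴ := by
  have hdc : (d : ℂ) ≠ 0 := Nat.cast_ne_zero.mpr (NeZero.ne d)
  set T : Matrix (ZMod d × ZMod d) (ZMod d × ZMod d) ℂ := ((d : ℂ))⁻¹ • Wmat d with hT
  have hTH : Tᴴ = ((d : ℂ))⁻¹ • (Wmat d)ᴴ := by
    rw [hT, Matrix.conjTranspose_smul]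
    congr 1
    simp [Complex.star_def, map_inv₀]
  have hTT : T * Tᴴ = 1 := by
    rw [hT, hTH, Matrix.smul_mul, Matrix.mul_smul, smul_smul, W_unit, smul_smul]
    rw [show ((d:ℂ))⁻¹ * ((d:ℂ))⁻¹ * ((d:ℂ) * (d:ℂ)) = 1 by field_simp]
    exact one_smul _ _
  have conj : ∀ A B : Matrix (ZMod d × ZMod d) (ZMod d × ZMod d) ℂ,
      Wmat d * A = B * Wmat d → T * A * Tᴴ = B := by
    intro A B h
    have hTA : T * A = B * T := by
      rw [hT, Matrix.smul_mul, h, Matrix.mul_smul]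
    rw [hTA, mul_assoc, hTT, mul_one]
  refine ⟨T, ?_, conj _ _ (W_X1 d), conj _ _ (W_1X d), conj _ _ (W_Z1 d), conj _ _ (W_1Z d)⟩
  rw [Matrix.mem_unitaryGroup_iff]
  exact hTT
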